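/- (Selected-mass comparison.) Suppose Pr(Y>0|A) ≥ Pr(Y>0|B) and let π be any optimal policy (maximizer of J) for some λ ≥ 0 and admissible g. With f(y',1) = p(y'|A)·π(A,y') − p(y'|B)·π(B,y'), one has ∑_{y'} |f(y',1)| ≤ ∑_{y'} |p(y'|A) − p(y'|B)|. -/

import Mathlib

/-!
Static setting: `Y` is a finite set of nonzero real qualifications; the two groups
`A`/`B` are encoded as `true`/`false`; `p c y` is the joint pmf on group × qualification.
-/

open Finset Filter Topology
open scoped Classical

noncomputable section

/-- Marginal probability of group `c`. -/
def pG (Y : Finset ℝ) (p : Bool → ℝ → ℝ) (c : Bool) : ℝ := ∑ y ∈ Y, p c y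

/-- Conditional pmf `p(y|c)`. -/
def pCond (Y : Finset ℝ) (p : Bool → ℝ → ℝ) (c : Bool) (y : ℝ) : ℝ := p c y / pG Y p c

/-- `p` is a pmf on `{A,B} × Y`, with positive group marginals, and all
qualifications in `Y` are nonzero. -/
def IsPMF (Y : Finset ℝ) (p : Bool → ℝ → ℝ) : Prop :=
  (∀ y ∈ Y, y ≠ 0) ∧ (∀ c, ∀ y ∈ Y, 0 ≤ p c y) ∧
    (∑ c : Bool, ∑ y ∈ Y, p c y) = 1 ∧ (∀ c, 0 < pG Y p c)

/-- A policy assigns selection probabilities in `[0,1]`. -/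
def Admissible (Y : Finset ℝ) (π : Bool → ℝ → ℝ) : Prop :=
  ∀ c, ∀ y ∈ Y, 0 ≤ π c y ∧ π c y ≤ 1

/-- Institution utility `U(π) = ∑ p(c,y)·y·π(c,y)`. -/
def util (Y : Finset ℝ) (p π : Bool → ℝ → ℝ) : ℝ :=
  ∑ c : Bool, ∑ y ∈ Y, p c y * y * π c y

/-- Selection rate of group `c`. -/
def selRate (Y : Finset ℝ) (p π : Bool → ℝ → ℝ) (c : Bool) : ℝ :=
  ∑ y ∈ Y, pCond Y p c y * π c y

/-- Disparity `Δ(π)`. -/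
def disp (Y : Finset ℝ) (p π : Bool → ℝ → ℝ) : ℝ :=
  |selRate Y p π true - selRate Y p π false|

/-- Penalized objective `J(π) = U(π) − λ·g(Δ(π))`. -/
def obj (Y : Finset ℝ) (p : Bool → ℝ → ℝ) (g : ℝ → ℝ) (lam : ℝ) (π : Bool → ℝ → ℝ) : ℝ :=
  util Y p π - lam * g (disp Y p π)

/-- Optimal policy: admissible maximizer of `J`. -/
def IsOptimal (Y : Finset ℝ) (p : Bool → ℝ → ℝ) (g : ℝ → ℝ) (lam : ℝ)
    (π : Bool → ℝ → ℝ) : Prop :=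
  Admissible Y π ∧ ∀ π', Admissible Y π' → obj Y p g lam π' ≤ obj Y p g lam π

/-- `g` is nondecreasing, nonnegative, convex on `[0,∞)` with `g 0 = 0`. -/
def AdmissiblePenalty (g : ℝ → ℝ) : Prop :=
  g 0 = 0 ∧ MonotoneOn g (Set.Ici 0) ∧ ConvexOn ℝ (Set.Ici 0) g ∧
    ∀ x ∈ Set.Ici (0 : ℝ), 0 ≤ g x

/-- `Pr(Y > 0 | c)`. -/
def posRate (Y : Finset ℝ) (p : Bool → ℝ → ℝ) (c : Bool) : ℝ :=
  ∑ y ∈ Y.filter (fun y => 0 < y), pCond Y p c y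

/-- `Δ_UM = Pr(Y>0|A) − Pr(Y>0|B)`. -/
def dUM (Y : Finset ℝ) (p : Bool → ℝ → ℝ) : ℝ := posRate Y p true - posRate Y p false

/-- `E[Y₊] = ∑_{c, y>0} p(c,y)·y`, the unconstrained maximal utility. -/
def eyPos (Y : Finset ℝ) (p : Bool → ℝ → ℝ) : ℝ :=
  ∑ c : Bool, ∑ y ∈ Y.filter (fun y => 0 < y), p c y * y

/-- The index set `𝒯_e`. -/
def TE (Y : Finset ℝ) (p : Bool → ℝ → ℝ) : Finset (ℝ × Bool) :=
  (Y ×ˢ (Finset.univ : Finset Bool)).filter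
    (fun yc => (yc.2 = true ∧ 0 < yc.1 ∧ 0 < pCond Y p true yc.1) ∨
               (yc.2 = false ∧ yc.1 < 0 ∧ 0 < pCond Y p false yc.1))


/-! ### Auxiliary lemmas -/

private lemma sum_diff_single {Y : Finset ℝ} {F G : ℝ → ℝ} {y₀ : ℝ} (h₀ : y₀ ∈ Y)
    (h : ∀ y ∈ Y, y ≠ y₀ → F y = G y) :
    ∑ y ∈ Y, F y = (∑ y ∈ Y, G y) + (F y₀ - G y₀) := by
  have h1 := Finset.sum_erase_add Y F h₀
  have h2 := Finset.sum_erase_add Y G h₀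
  have h3 : ∑ y ∈ Y.erase y₀, F y = ∑ y ∈ Y.erase y₀, G y :=
    Finset.sum_congr rfl fun y hy => h y (Finset.mem_of_mem_erase hy) (Finset.ne_of_mem_erase hy)
  linarith

/-- Pointwise update of a policy at a single (group, qualification) pair. -/
def upd (π : Bool → ℝ → ℝ) (c₀ : Bool) (y₀ : ℝ) (v : ℝ) : Bool → ℝ → ℝ :=
  fun c y => if c = c₀ ∧ y = y₀ then v else π c y

lemma wsum_upd (Y : Finset ℝ) (w π : Bool → ℝ → ℝ) (c₀ : Bool) {y₀ : ℝ} (hy : y₀ ∈ Y)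
    (v : ℝ) (c : Bool) :
    ∑ y ∈ Y, w c y * upd π c₀ y₀ v c y
      = (∑ y ∈ Y, w c y * π c y) + (if c = c₀ then w c y₀ * (v - π c y₀) else 0) := by
  by_cases hc : c = c₀
  · subst hc
    rw [sum_diff_single (F := fun y => w c y * upd π c y₀ v c y)
        (G := fun y => w c y * π c y) hy (fun y _ hne => by simp [upd, hne])]
    simp [upd]
    ring
  · simp only [if_neg hc, add_zero]
    exact Finset.sum_congr rfl fun y _ => by simp [upd, hc]

lemma util_upd (Y : Finset ℝ) (p π : Bool → ℝ → ℝ) (c₀ : Bool) {y₀ : ℝ} (hy : y₀ ∈ Y) (v : ℝ) :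
    util Y p (upd π c₀ y₀ v) = util Y p π + p c₀ y₀ * y₀ * (v - π c₀ y₀) := by
  unfold util
  have h : ∀ c, ∑ y ∈ Y, p c y * y * upd π c₀ y₀ v c y
      = (∑ y ∈ Y, p c y * y * π c y) + (if c = c₀ then p c y₀ * y₀ * (v - π c y₀) else 0) :=
    fun c => wsum_upd Y (fun c y => p c y * y) π c₀ hy v c
  rw [Fintype.sum_bool, Fintype.sum_bool, h true, h false]
  cases c₀ <;> simp <;> ring

lemma selRate_upd (Y : Finset ℝ) (p π : Bool → ℝ → ℝ) (c₀ : Bool) {y₀ : ℝ} (hy : y₀ ∈ Y)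
    (v : ℝ) (c : Bool) :
    selRate Y p (upd π c₀ y₀ v) c
      = selRate Y p π c + (if c = c₀ then pCond Y p c y₀ * (v - π c y₀) else 0) :=
  wsum_upd Y (pCond Y p) π c₀ hy v c

lemma adm_upd {Y : Finset ℝ} {π : Bool → ℝ → ℝ} (h : Admissible Y π) (c₀ : Bool) (y₀ : ℝ)
    {v : ℝ} (h0 : 0 ≤ v) (h1 : v ≤ 1) : Admissible Y (upd π c₀ y₀ v) := by
  intro c y hy
  unfold upd
  split_ifs with hh
  · exact ⟨h0, h1⟩
  · exact h c y hy

lemma improve {Y : Finset ℝ} {p : Bool → ℝ → ℝ} {g : ℝ → ℝ} {lam : ℝ}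
    (hg : AdmissiblePenalty g) (hlam : 0 ≤ lam) {π : Bool → ℝ → ℝ}
    (hopt : IsOptimal Y p g lam π) (π' : Bool → ℝ → ℝ) (hadm : Admissible Y π')
    (hu : util Y p π < util Y p π') (hd : disp Y p π' ≤ disp Y p π) : False := by
  have h := hopt.2 π' hadm
  have h0 : (0:ℝ) ≤ disp Y p π' := by unfold disp; exact abs_nonneg _
  have h0' : (0:ℝ) ≤ disp Y p π := by unfold disp; exact abs_nonneg _
  have hgm : g (disp Y p π') ≤ g (disp Y p π) :=
    hg.2.1 (Set.mem_Ici.mpr h0) (Set.mem_Ici.mpr h0') hd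
  unfold obj at h
  nlinarith [mul_le_mul_of_nonneg_left hgm hlam]

/-- Single-point perturbation of group A. -/
lemma improveA {Y : Finset ℝ} {p : Bool → ℝ → ℝ} {g : ℝ → ℝ} {lam : ℝ}
    (hg : AdmissiblePenalty g) (hlam : 0 ≤ lam) {π : Bool → ℝ → ℝ}
    (hopt : IsOptimal Y p g lam π) {y₀ : ℝ} (hy : y₀ ∈ Y) {v : ℝ} (h0 : 0 ≤ v) (h1 : v ≤ 1)
    (hu : 0 < p true y₀ * y₀ * (v - π true y₀))
    (hd : |selRate Y p π true - selRate Y p π false + pCond Y p true y₀ * (v - π true y₀)|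
        ≤ |selRate Y p π true - selRate Y p π false|) : False := by
  refine improve hg hlam hopt (upd π true y₀ v) (adm_upd hopt.1 _ _ h0 h1) ?_ ?_
  · rw [util_upd Y p π true hy v]; linarith
  · unfold disp
    rw [selRate_upd Y p π true hy v true, selRate_upd Y p π true hy v false]
    simp only [if_pos rfl, if_neg (by simp : ¬ false = true), add_zero]
    calc |selRate Y p π true + pCond Y p true y₀ * (v - π true y₀) - selRate Y p π false|
        = |selRate Y p π true - selRate Y p π false + pCond Y p true y₀ * (v - π true y₀)| := by
          ring_nf
      _ ≤ |selRate Y p π true - selRate Y p π false| := hd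

/-- Single-point perturbation of group B. -/
lemma improveB {Y : Finset ℝ} {p : Bool → ℝ → ℝ} {g : ℝ → ℝ} {lam : ℝ}
    (hg : AdmissiblePenalty g) (hlam : 0 ≤ lam) {π : Bool → ℝ → ℝ}
    (hopt : IsOptimal Y p g lam π) {y₀ : ℝ} (hy : y₀ ∈ Y) {v : ℝ} (h0 : 0 ≤ v) (h1 : v ≤ 1)
    (hu : 0 < p false y₀ * y₀ * (v - π false y₀))
    (hd : |selRate Y p π true - selRate Y p π false - pCond Y p false y₀ * (v - π false y₀)|
        ≤ |selRate Y p π true - selRate Y p π false|) : False := by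
  refine improve hg hlam hopt (upd π false y₀ v) (adm_upd hopt.1 _ _ h0 h1) ?_ ?_
  · rw [util_upd Y p π false hy v]; linarith
  · unfold disp
    rw [selRate_upd Y p π false hy v true, selRate_upd Y p π false hy v false]
    simp only [if_pos rfl, if_neg (by simp : ¬ true = false), add_zero]
    calc |selRate Y p π true - (selRate Y p π false + pCond Y p false y₀ * (v - π false y₀))|
        = |selRate Y p π true - selRate Y p π false - pCond Y p false y₀ * (v - π false y₀)| := by
          ring_nf
      _ ≤ |selRate Y p π true - selRate Y p π false| := hd

/-- Two-point perturbation within one group that keeps both selection rates fixed. -/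
lemma improve_within {Y : Finset ℝ} {p : Bool → ℝ → ℝ} {g : ℝ → ℝ} {lam : ℝ}
    (hg : AdmissiblePenalty g) (hlam : 0 ≤ lam) {π : Bool → ℝ → ℝ}
    (hopt : IsOptimal Y p g lam π) (c : Bool) {y₁ y₂ : ℝ} (hy₁ : y₁ ∈ Y) (hy₂ : y₂ ∈ Y)
    (hne : y₂ ≠ y₁) {v₁ v₂ : ℝ}
    (h01 : 0 ≤ v₁) (h11 : v₁ ≤ 1) (h02 : 0 ≤ v₂) (h12 : v₂ ≤ 1)
    (hsel : pCond Y p c y₁ * (v₁ - π c y₁) + pCond Y p c y₂ * (v₂ - π c y₂) = 0)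
    (hu : 0 < p c y₁ * y₁ * (v₁ - π c y₁) + p c y₂ * y₂ * (v₂ - π c y₂)) : False := by
  set π₁ := upd π c y₁ v₁ with hπ₁
  have e₁ : ∀ c', π₁ c' y₂ = π c' y₂ := fun c' => by simp [hπ₁, upd, hne]
  refine improve hg hlam hopt (upd π₁ c y₂ v₂)
    (adm_upd (adm_upd hopt.1 _ _ h01 h11) _ _ h02 h12) ?_ ?_
  · rw [util_upd Y p π₁ c hy₂ v₂, util_upd Y p π c hy₁ v₁, e₁ c]; linarith
  · have hs : ∀ c', selRate Y p (upd π₁ c y₂ v₂) c'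
        = selRate Y p π c' + ((if c' = c then pCond Y p c' y₁ * (v₁ - π c' y₁) else 0)
            + (if c' = c then pCond Y p c' y₂ * (v₂ - π c' y₂) else 0)) := by
      intro c'
      rw [selRate_upd Y p π₁ c hy₂ v₂ c', hπ₁, selRate_upd Y p π c hy₁ v₁ c']
      by_cases hc : c' = c
      · subst hc; simp only [if_pos rfl]
        rw [show upd π c' y₁ v₁ c' y₂ = π c' y₂ from by simp [upd, hne]]
        ring
      · simp [hc]
    unfold disp
    rw [hs true, hs false]
    cases c
    · simp only [if_neg (by simp : ¬ true = false), if_pos rfl, if_true]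
      rw [hsel]
      simp
    · simp only [if_pos rfl, if_neg (by simp : ¬ false = true), if_true]
      rw [hsel]
      simp

/-- Cross-group two-point perturbation that keeps the disparity fixed. -/
lemma improve_cross {Y : Finset ℝ} {p : Bool → ℝ → ℝ} {g : ℝ → ℝ} {lam : ℝ}
    (hg : AdmissiblePenalty g) (hlam : 0 ≤ lam) {π : Bool → ℝ → ℝ}
    (hopt : IsOptimal Y p g lam π) {y₁ y₂ : ℝ} (hy₁ : y₁ ∈ Y) (hy₂ : y₂ ∈ Y) {v₁ v₂ : ℝ}
    (h01 : 0 ≤ v₁) (h11 : v₁ ≤ 1) (h02 : 0 ≤ v₂) (h12 : v₂ ≤ 1)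
    (hsel : pCond Y p true y₁ * (v₁ - π true y₁) = pCond Y p false y₂ * (v₂ - π false y₂))
    (hu : 0 < p true y₁ * y₁ * (v₁ - π true y₁) + p false y₂ * y₂ * (v₂ - π false y₂)) :
    False := by
  set π₁ := upd π true y₁ v₁ with hπ₁
  have e₁ : ∀ y, π₁ false y = π false y := fun y => by simp [hπ₁, upd]
  refine improve hg hlam hopt (upd π₁ false y₂ v₂)
    (adm_upd (adm_upd hopt.1 _ _ h01 h11) _ _ h02 h12) ?_ ?_
  · rw [util_upd Y p π₁ false hy₂ v₂, util_upd Y p π true hy₁ v₁, e₁ y₂]; linarith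
  · unfold disp
    rw [selRate_upd Y p π₁ false hy₂ v₂ true, selRate_upd Y p π₁ false hy₂ v₂ false,
      hπ₁, selRate_upd Y p π true hy₁ v₁ true, selRate_upd Y p π true hy₁ v₁ false]
    simp only [if_pos rfl, if_neg (by simp : ¬ true = false),
      if_neg (by simp : ¬ false = true), add_zero]
    rw [show upd π true y₁ v₁ false y₂ = π false y₂ from by simp [upd]]
    rw [hsel]
    apply le_of_eq
    ring_nf

/-- Selected-mass comparison. If `Pr(Y>0|A) ≥ Pr(Y>0|B)` and `π`
is optimal, then `∑_{y} |p(y|A)π(A,y) − p(y|B)π(B,y)| ≤ ∑_{y} |p(y|A) − p(y|B)|`. -/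
theorem stmt_18 (Y : Finset ℝ) (p : Bool → ℝ → ℝ) (hp : IsPMF Y p)
    (hadv : posRate Y p false ≤ posRate Y p true)
    (g : ℝ → ℝ) (hg : AdmissiblePenalty g) (lam : ℝ) (hlam : 0 ≤ lam)
    (π : Bool → ℝ → ℝ) (hopt : IsOptimal Y p g lam π) :
    ∑ y ∈ Y, |pCond Y p true y * π true y - pCond Y p false y * π false y| ≤
      ∑ y ∈ Y, |pCond Y p true y - pCond Y p false y| := by
  classical
  obtain ⟨hY0, hpnn, hsum1, hpg⟩ := hp
  have hadm := hopt.1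
  have hπ0 : ∀ c, ∀ y ∈ Y, 0 ≤ π c y := fun c y hy => (hadm c y hy).1
  have hπ1 : ∀ c, ∀ y ∈ Y, π c y ≤ 1 := fun c y hy => (hadm c y hy).2
  have hcnn : ∀ c, ∀ y ∈ Y, 0 ≤ pCond Y p c y := fun c y hy =>
    div_nonneg (hpnn c y hy) (hpg c).le
  have hqpos : ∀ c, ∀ y ∈ Y, 0 < pCond Y p c y → 0 < p c y := by
    intro c y hy h
    have h2 := mul_pos h (hpg c)
    unfold pCond at h2
    rwa [div_mul_cancel₀ _ (hpg c).ne'] at h2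
  have hfacpos : ∀ (x z : ℝ), 0 ≤ x → 0 ≤ z → x * z ≠ 0 → 0 < x ∧ 0 < z := by
    intro x z hx hz h
    constructor
    · rcases hx.lt_or_eq with h' | h'
      · exact h'
      · exact absurd (by rw [← h']; ring) h
    · rcases hz.lt_or_eq with h' | h'
      · exact h'
      · exact absurd (by rw [← h']; ring) h
  have hsplit : ∀ f : ℝ → ℝ, ∑ y ∈ Y, f y
      = (∑ y ∈ Y.filter (fun y => 0 < y), f y) + ∑ y ∈ Y.filter (fun y => y < 0), f y := by
    intro f
    rw [← Finset.sum_filter_add_sum_filter_not Y (fun y => 0 < y) f]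
    congr 1
    apply Finset.sum_congr _ (fun _ _ => rfl)
    apply Finset.filter_congr
    intro y hy
    simp only [not_lt]
    exact ⟨fun h => lt_of_le_of_ne h (hY0 y hy), le_of_lt⟩
  -- reusable bounds
  have keyB1 : (∀ y ∈ Y, y < 0 → pCond Y p false y * π false y = 0) →
      selRate Y p π false ≤ posRate Y p false := by
    intro hz
    have e : selRate Y p π false
        = (∑ y ∈ Y.filter (fun y => 0 < y), pCond Y p false y * π false y)
          + ∑ y ∈ Y.filter (fun y => y < 0), pCond Y p false y * π false y :=
      hsplit (fun y => pCond Y p false y * π false y)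
    have h1 : ∑ y ∈ Y.filter (fun y => y < 0), pCond Y p false y * π false y = 0 :=
      Finset.sum_eq_zero fun y hy =>
        hz y (Finset.mem_filter.mp hy).1 (Finset.mem_filter.mp hy).2
    have h2 : ∑ y ∈ Y.filter (fun y => 0 < y), pCond Y p false y * π false y
        ≤ posRate Y p false := by
      apply Finset.sum_le_sum
      intro y hy
      have hy' := Finset.mem_filter.mp hy
      exact mul_le_of_le_one_right (hcnn false y hy'.1) (hπ1 false y hy'.1)
    linarith
  have keyA1 : (∀ y ∈ Y, 0 < y → pCond Y p true y * (1 - π true y) = 0) →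
      posRate Y p true ≤ selRate Y p π true := by
    intro hz
    have e : posRate Y p true
        = ∑ y ∈ Y.filter (fun y => 0 < y), pCond Y p true y * π true y := by
      apply Finset.sum_congr rfl
      intro y hy
      have hy' := Finset.mem_filter.mp hy
      have h := hz y hy'.1 hy'.2
      linear_combination h
    rw [e]
    exact Finset.sum_le_sum_of_subset_of_nonneg (Finset.filter_subset _ _)
      (fun y hy _ => mul_nonneg (hcnn true y hy) (hπ0 true y hy))
  -- Fact C : no overshoot
  have hD0 : 0 ≤ selRate Y p π true - selRate Y p π false := by
    by_contra hD
    push_neg at hD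
    have C1 : ∀ y ∈ Y, y < 0 → pCond Y p false y * π false y = 0 := by
      intro y hy hyn
      by_contra hne
      obtain ⟨hbp, hπp⟩ := hfacpos _ _ (hcnn false y hy) (hπ0 false y hy) hne
      have hpy : 0 < p false y := hqpos false y hy hbp
      set δ := min (π false y)
        ((selRate Y p π false - selRate Y p π true) / pCond Y p false y) with hδdef
      have hδp : 0 < δ := lt_min hπp (div_pos (by linarith) hbp)
      have hδ1 : δ ≤ π false y := min_le_left _ _
      have hδ2 : pCond Y p false y * δ ≤ selRate Y p π false - selRate Y p π true := by
        calc pCond Y p false y * δ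
            ≤ pCond Y p false y
              * ((selRate Y p π false - selRate Y p π true) / pCond Y p false y) :=
              mul_le_mul_of_nonneg_left (min_le_right _ _) hbp.le
          _ = _ := by rw [mul_comm, div_mul_cancel₀ _ hbp.ne']
      have hbd : 0 ≤ pCond Y p false y * δ := by positivity
      refine improveB hg hlam hopt hy (v := π false y - δ) (by linarith)
        (by linarith [hπ1 false y hy]) ?_ ?_
      · have e : p false y * y * (π false y - δ - π false y) = p false y * (-y) * δ := by ring
        rw [e]
        exact mul_pos (mul_pos hpy (by linarith)) hδp
      · have e : selRate Y p π true - selRate Y p π false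
            - pCond Y p false y * (π false y - δ - π false y)
            = selRate Y p π true - selRate Y p π false + pCond Y p false y * δ := by ring
        rw [e, abs_of_nonpos (by linarith), abs_of_nonpos (by linarith)]
        linarith
    have C2 : ∀ y ∈ Y, 0 < y → pCond Y p true y * (1 - π true y) = 0 := by
      intro y hy hyp
      by_contra hne
      obtain ⟨hap, hπlt⟩ := hfacpos _ _ (hcnn true y hy)
        (by linarith [hπ1 true y hy]) hne
      have hpy : 0 < p true y := hqpos true y hy hap
      set δ := min (1 - π true y)
        ((selRate Y p π false - selRate Y p π true) / pCond Y p true y) with hδdef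
      have hδp : 0 < δ := lt_min hπlt (div_pos (by linarith) hap)
      have hδ1 : δ ≤ 1 - π true y := min_le_left _ _
      have hδ2 : pCond Y p true y * δ ≤ selRate Y p π false - selRate Y p π true := by
        calc pCond Y p true y * δ
            ≤ pCond Y p true y
              * ((selRate Y p π false - selRate Y p π true) / pCond Y p true y) :=
              mul_le_mul_of_nonneg_left (min_le_right _ _) hap.le
          _ = _ := by rw [mul_comm, div_mul_cancel₀ _ hap.ne']
      have hbd : 0 ≤ pCond Y p true y * δ := by positivity
      refine improveA hg hlam hopt hy (v := π true y + δ)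
        (by linarith [hπ0 true y hy]) (by linarith) ?_ ?_
      · have e : p true y * y * (π true y + δ - π true y) = p true y * y * δ := by ring
        rw [e]
        exact mul_pos (mul_pos hpy hyp) hδp
      · have e : selRate Y p π true - selRate Y p π false
            + pCond Y p true y * (π true y + δ - π true y)
            = selRate Y p π true - selRate Y p π false + pCond Y p true y * δ := by ring
        rw [e, abs_of_nonpos (by linarith), abs_of_nonpos (by linarith)]
        linarith
    have h1 := keyA1 C2
    have h2 := keyB1 C1
    linarith
  -- Fact A : nobody negative is selected in group A
  have FactA : ∀ y ∈ Y, y < 0 → pCond Y p true y * π true y = 0 := by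
    intro y hy hyn
    by_contra hne
    obtain ⟨hap, hπp⟩ := hfacpos _ _ (hcnn true y hy) (hπ0 true y hy) hne
    have hpy : 0 < p true y := hqpos true y hy hap
    rcases eq_or_lt_of_le hD0 with hDeq | hDpos
    · -- zero disparity case
      have WA : ∀ y' ∈ Y, 0 < y' → pCond Y p true y' * (1 - π true y') = 0 := by
        intro y' hy' hyp'
        by_contra hne'
        obtain ⟨hap', hπlt'⟩ := hfacpos _ _ (hcnn true y' hy')
          (by linarith [hπ1 true y' hy']) hne'
        have hpy' : 0 < p true y' := hqpos true y' hy' hap'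
        set ε := min ((1 - π true y') / pCond Y p true y)
          (π true y / pCond Y p true y') with hε
        have hεp : 0 < ε := lt_min (div_pos hπlt' hap) (div_pos hπp hap')
        have hb1 : ε * pCond Y p true y ≤ 1 - π true y' := by
          calc ε * pCond Y p true y
              ≤ ((1 - π true y') / pCond Y p true y) * pCond Y p true y :=
                mul_le_mul_of_nonneg_right (min_le_left _ _) hap.le
            _ = 1 - π true y' := div_mul_cancel₀ _ hap.ne'
        have hb2 : ε * pCond Y p true y' ≤ π true y := by
          calc ε * pCond Y p true y'
              ≤ (π true y / pCond Y p true y') * pCond Y p true y' :=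
                mul_le_mul_of_nonneg_right (min_le_right _ _) hap'.le
            _ = π true y := div_mul_cancel₀ _ hap'.ne'
        have hεa : 0 ≤ ε * pCond Y p true y := by positivity
        have hεa' : 0 ≤ ε * pCond Y p true y' := by positivity
        refine improve_within hg hlam hopt true hy' hy (ne_of_lt (lt_trans hyn hyp'))
          (v₁ := π true y' + ε * pCond Y p true y)
          (v₂ := π true y - ε * pCond Y p true y')
          (by linarith [hπ0 true y' hy']) (by linarith) (by linarith)
          (by linarith [hπ1 true y hy]) (by ring) ?_
        have e : p true y' * y' * (π true y' + ε * pCond Y p true y - π true y')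
            + p true y * y * (π true y - ε * pCond Y p true y' - π true y)
            = p true y' * y' * (ε * pCond Y p true y)
              + p true y * (-y) * (ε * pCond Y p true y') := by ring
        rw [e]
        have t1 : 0 < p true y' * y' * (ε * pCond Y p true y) :=
          mul_pos (mul_pos hpy' hyp') (mul_pos hεp hap)
        have t2 : 0 < p true y * (-y) * (ε * pCond Y p true y') :=
          mul_pos (mul_pos hpy (by linarith)) (mul_pos hεp hap')
        linarith
      have ZA : ∀ y' ∈ Y, y' < 0 → pCond Y p false y' * π false y' = 0 := by
        intro y' hy' hyn'
        by_contra hne'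
        obtain ⟨hbp', hπp'⟩ := hfacpos _ _ (hcnn false y' hy') (hπ0 false y' hy') hne'
        have hpy' : 0 < p false y' := hqpos false y' hy' hbp'
        set ε := min (π true y / pCond Y p false y')
          (π false y' / pCond Y p true y) with hε
        have hεp : 0 < ε := lt_min (div_pos hπp hbp') (div_pos hπp' hap)
        have hb1 : ε * pCond Y p false y' ≤ π true y := by
          calc ε * pCond Y p false y'
              ≤ (π true y / pCond Y p false y') * pCond Y p false y' :=
                mul_le_mul_of_nonneg_right (min_le_left _ _) hbp'.le
            _ = π true y := div_mul_cancel₀ _ hbp'.ne'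
        have hb2 : ε * pCond Y p true y ≤ π false y' := by
          calc ε * pCond Y p true y
              ≤ (π false y' / pCond Y p true y) * pCond Y p true y :=
                mul_le_mul_of_nonneg_right (min_le_right _ _) hap.le
            _ = π false y' := div_mul_cancel₀ _ hap.ne'
        have hεa : 0 ≤ ε * pCond Y p false y' := by positivity
        have hεa' : 0 ≤ ε * pCond Y p true y := by positivity
        refine improve_cross hg hlam hopt hy hy'
          (v₁ := π true y - ε * pCond Y p false y')
          (v₂ := π false y' - ε * pCond Y p true y)
          (by linarith) (by linarith [hπ1 true y hy]) (by linarith)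
          (by linarith [hπ1 false y' hy']) (by ring) ?_
        have e : p true y * y * (π true y - ε * pCond Y p false y' - π true y)
            + p false y' * y' * (π false y' - ε * pCond Y p true y - π false y')
            = p true y * (-y) * (ε * pCond Y p false y')
              + p false y' * (-y') * (ε * pCond Y p true y) := by ring
        rw [e]
        have t1 : 0 < p true y * (-y) * (ε * pCond Y p false y') :=
          mul_pos (mul_pos hpy (by linarith)) (mul_pos hεp hbp')
        have t2 : 0 < p false y' * (-y') * (ε * pCond Y p true y) :=
          mul_pos (mul_pos hpy' (by linarith)) (mul_pos hεp hap)
        linarith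
      have h1 : posRate Y p true + pCond Y p true y * π true y ≤ selRate Y p π true := by
        have e : selRate Y p π true
            = (∑ y ∈ Y.filter (fun y => 0 < y), pCond Y p true y * π true y)
              + ∑ y ∈ Y.filter (fun y => y < 0), pCond Y p true y * π true y :=
          hsplit (fun y => pCond Y p true y * π true y)
        have e1 : ∑ y ∈ Y.filter (fun y => 0 < y), pCond Y p true y * π true y
            = posRate Y p true := by
          apply Finset.sum_congr rfl
          intro y' hy'
          have hy'' := Finset.mem_filter.mp hy'
          have h := WA y' hy''.1 hy''.2
          linear_combination -h
        have e2 : pCond Y p true y * π true y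
            ≤ ∑ y ∈ Y.filter (fun y => y < 0), pCond Y p true y * π true y :=
          Finset.single_le_sum (f := fun y => pCond Y p true y * π true y)
            (fun y' hy' => mul_nonneg (hcnn true y' (Finset.mem_filter.mp hy').1)
              (hπ0 true y' (Finset.mem_filter.mp hy').1))
            (Finset.mem_filter.mpr ⟨hy, hyn⟩)
        linarith
      have h2 := keyB1 ZA
      have h3 : 0 < pCond Y p true y * π true y := mul_pos hap hπp
      linarith
    · -- positive disparity case
      set δ := min (π true y)
        ((selRate Y p π true - selRate Y p π false) / pCond Y p true y) with hδdef
      have hδp : 0 < δ := lt_min hπp (div_pos hDpos hap)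
      have hδ1 : δ ≤ π true y := min_le_left _ _
      have hδ2 : pCond Y p true y * δ ≤ selRate Y p π true - selRate Y p π false := by
        calc pCond Y p true y * δ
            ≤ pCond Y p true y
              * ((selRate Y p π true - selRate Y p π false) / pCond Y p true y) :=
              mul_le_mul_of_nonneg_left (min_le_right _ _) hap.le
          _ = _ := by rw [mul_comm, div_mul_cancel₀ _ hap.ne']
      have hbd : 0 ≤ pCond Y p true y * δ := by positivity
      refine improveA hg hlam hopt hy (v := π true y - δ) (by linarith)
        (by linarith [hπ1 true y hy]) ?_ ?_
      · have e : p true y * y * (π true y - δ - π true y) = p true y * (-y) * δ := by ring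
        rw [e]
        exact mul_pos (mul_pos hpy (by linarith)) hδp
      · have e : selRate Y p π true - selRate Y p π false
            + pCond Y p true y * (π true y - δ - π true y)
            = selRate Y p π true - selRate Y p π false - pCond Y p true y * δ := by ring
        rw [e, abs_of_nonneg (by linarith), abs_of_pos hDpos]
        linarith
  -- Fact B : everybody positive is selected in group B
  have FactB : ∀ y ∈ Y, 0 < y → pCond Y p false y * (1 - π false y) = 0 := by
    intro y hy hyp
    by_contra hne
    obtain ⟨hbp, hπlt⟩ := hfacpos _ _ (hcnn false y hy)
      (by linarith [hπ1 false y hy]) hne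
    have hpy : 0 < p false y := hqpos false y hy hbp
    rcases eq_or_lt_of_le hD0 with hDeq | hDpos
    · -- zero disparity case
      have WB : ∀ y' ∈ Y, y' < 0 → pCond Y p false y' * π false y' = 0 := by
        intro y' hy' hyn'
        by_contra hne'
        obtain ⟨hbp', hπp'⟩ := hfacpos _ _ (hcnn false y' hy') (hπ0 false y' hy') hne'
        have hpy' : 0 < p false y' := hqpos false y' hy' hbp'
        set ε := min ((1 - π false y) / pCond Y p false y')
          (π false y' / pCond Y p false y) with hε
        have hεp : 0 < ε := lt_min (div_pos hπlt hbp') (div_pos hπp' hbp)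
        have hb1 : ε * pCond Y p false y' ≤ 1 - π false y := by
          calc ε * pCond Y p false y'
              ≤ ((1 - π false y) / pCond Y p false y') * pCond Y p false y' :=
                mul_le_mul_of_nonneg_right (min_le_left _ _) hbp'.le
            _ = 1 - π false y := div_mul_cancel₀ _ hbp'.ne'
        have hb2 : ε * pCond Y p false y ≤ π false y' := by
          calc ε * pCond Y p false y
              ≤ (π false y' / pCond Y p false y) * pCond Y p false y :=
                mul_le_mul_of_nonneg_right (min_le_right _ _) hbp.le
            _ = π false y' := div_mul_cancel₀ _ hbp.ne'
        have hεa : 0 ≤ ε * pCond Y p false y' := by positivity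
        have hεa' : 0 ≤ ε * pCond Y p false y := by positivity
        refine improve_within hg hlam hopt false hy hy' (ne_of_lt (lt_trans hyn' hyp))
          (v₁ := π false y + ε * pCond Y p false y')
          (v₂ := π false y' - ε * pCond Y p false y)
          (by linarith [hπ0 false y hy]) (by linarith) (by linarith)
          (by linarith [hπ1 false y' hy']) (by ring) ?_
        have e : p false y * y * (π false y + ε * pCond Y p false y' - π false y)
            + p false y' * y' * (π false y' - ε * pCond Y p false y - π false y')
            = p false y * y * (ε * pCond Y p false y')
              + p false y' * (-y') * (ε * pCond Y p false y) := by ring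
        rw [e]
        have t1 : 0 < p false y * y * (ε * pCond Y p false y') :=
          mul_pos (mul_pos hpy hyp) (mul_pos hεp hbp')
        have t2 : 0 < p false y' * (-y') * (ε * pCond Y p false y) :=
          mul_pos (mul_pos hpy' (by linarith)) (mul_pos hεp hbp)
        linarith
      have XB : ∀ y' ∈ Y, 0 < y' → pCond Y p true y' * (1 - π true y') = 0 := by
        intro y' hy' hyp'
        by_contra hne'
        obtain ⟨hap', hπlt'⟩ := hfacpos _ _ (hcnn true y' hy')
          (by linarith [hπ1 true y' hy']) hne'
        have hpy' : 0 < p true y' := hqpos true y' hy' hap'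
        set ε := min ((1 - π true y') / pCond Y p false y)
          ((1 - π false y) / pCond Y p true y') with hε
        have hεp : 0 < ε := lt_min (div_pos hπlt' hbp) (div_pos hπlt hap')
        have hb1 : ε * pCond Y p false y ≤ 1 - π true y' := by
          calc ε * pCond Y p false y
              ≤ ((1 - π true y') / pCond Y p false y) * pCond Y p false y :=
                mul_le_mul_of_nonneg_right (min_le_left _ _) hbp.le
            _ = 1 - π true y' := div_mul_cancel₀ _ hbp.ne'
        have hb2 : ε * pCond Y p true y' ≤ 1 - π false y := by
          calc ε * pCond Y p true y'
              ≤ ((1 - π false y) / pCond Y p true y') * pCond Y p true y' :=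
                mul_le_mul_of_nonneg_right (min_le_right _ _) hap'.le
            _ = 1 - π false y := div_mul_cancel₀ _ hap'.ne'
        have hεa : 0 ≤ ε * pCond Y p false y := by positivity
        have hεa' : 0 ≤ ε * pCond Y p true y' := by positivity
        refine improve_cross hg hlam hopt hy' hy
          (v₁ := π true y' + ε * pCond Y p false y)
          (v₂ := π false y + ε * pCond Y p true y')
          (by linarith [hπ0 true y' hy']) (by linarith)
          (by linarith [hπ0 false y hy]) (by linarith) (by ring) ?_
        have e : p true y' * y' * (π true y' + ε * pCond Y p false y - π true y')
            + p false y * y * (π false y + ε * pCond Y p true y' - π false y)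
            = p true y' * y' * (ε * pCond Y p false y)
              + p false y * y * (ε * pCond Y p true y') := by ring
        rw [e]
        have t1 : 0 < p true y' * y' * (ε * pCond Y p false y) :=
          mul_pos (mul_pos hpy' hyp') (mul_pos hεp hbp)
        have t2 : 0 < p false y * y * (ε * pCond Y p true y') :=
          mul_pos (mul_pos hpy hyp) (mul_pos hεp hap')
        linarith
      have h1 := keyA1 XB
      have h2 : selRate Y p π false + pCond Y p false y * (1 - π false y)
          ≤ posRate Y p false := by
        have e : selRate Y p π false
            = (∑ y ∈ Y.filter (fun y => 0 < y), pCond Y p false y * π false y)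
              + ∑ y ∈ Y.filter (fun y => y < 0), pCond Y p false y * π false y :=
          hsplit (fun y => pCond Y p false y * π false y)
        have e0 : ∑ y ∈ Y.filter (fun y => y < 0), pCond Y p false y * π false y = 0 :=
          Finset.sum_eq_zero fun y' hy' =>
            WB y' (Finset.mem_filter.mp hy').1 (Finset.mem_filter.mp hy').2
        have e1 : pCond Y p false y * (1 - π false y)
            ≤ ∑ y' ∈ Y.filter (fun y => 0 < y),
                (pCond Y p false y' - pCond Y p false y' * π false y') := by
          have hnn : ∀ y' ∈ Y.filter (fun y => 0 < y),
              0 ≤ pCond Y p false y' - pCond Y p false y' * π false y' := by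
            intro y' hy'
            have hm := Finset.mem_filter.mp hy'
            nlinarith [mul_nonneg (hcnn false y' hm.1)
              (sub_nonneg.mpr (hπ1 false y' hm.1))]
          have h := Finset.single_le_sum
            (f := fun y' => pCond Y p false y' - pCond Y p false y' * π false y')
            hnn (Finset.mem_filter.mpr ⟨hy, hyp⟩)
          linarith [h]
        have e2 : ∑ y' ∈ Y.filter (fun y => 0 < y),
            (pCond Y p false y' - pCond Y p false y' * π false y')
            = posRate Y p false
              - ∑ y ∈ Y.filter (fun y => 0 < y), pCond Y p false y * π false y := by
          rw [Finset.sum_sub_distrib]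
          rfl
        linarith
      have h3 : 0 < pCond Y p false y * (1 - π false y) := mul_pos hbp hπlt
      linarith
    · -- positive disparity case
      set δ := min (1 - π false y)
        ((selRate Y p π true - selRate Y p π false) / pCond Y p false y) with hδdef
      have hδp : 0 < δ := lt_min hπlt (div_pos hDpos hbp)
      have hδ1 : δ ≤ 1 - π false y := min_le_left _ _
      have hδ2 : pCond Y p false y * δ ≤ selRate Y p π true - selRate Y p π false := by
        calc pCond Y p false y * δ
            ≤ pCond Y p false y
              * ((selRate Y p π true - selRate Y p π false) / pCond Y p false y) :=
              mul_le_mul_of_nonneg_left (min_le_right _ _) hbp.le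
          _ = _ := by rw [mul_comm, div_mul_cancel₀ _ hbp.ne']
      have hbd : 0 ≤ pCond Y p false y * δ := by positivity
      refine improveB hg hlam hopt hy (v := π false y + δ)
        (by linarith [hπ0 false y hy]) (by linarith) ?_ ?_
      · have e : p false y * y * (π false y + δ - π false y) = p false y * y * δ := by ring
        rw [e]
        exact mul_pos (mul_pos hpy hyp) hδp
      · have e : selRate Y p π true - selRate Y p π false
            - pCond Y p false y * (π false y + δ - π false y)
            = selRate Y p π true - selRate Y p π false - pCond Y p false y * δ := by ring
        rw [e, abs_of_nonneg (by linarith), abs_of_pos hDpos]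
        linarith
  -- final computation
  have hsuma : ∑ y ∈ Y, pCond Y p true y = 1 := by
    unfold pCond
    rw [← Finset.sum_div]
    exact div_self (hpg true).ne'
  have hsumb : ∑ y ∈ Y, pCond Y p false y = 1 := by
    unfold pCond
    rw [← Finset.sum_div]
    exact div_self (hpg false).ne'
  have hM : ∑ y ∈ Y, |pCond Y p true y - pCond Y p false y|
      = 2 * ∑ y ∈ Y, max (pCond Y p true y - pCond Y p false y) 0 := by
    have habs : ∀ y ∈ Y, |pCond Y p true y - pCond Y p false y|
        = 2 * max (pCond Y p true y - pCond Y p false y) 0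
          - (pCond Y p true y - pCond Y p false y) := by
      intro y _
      rcases le_total (pCond Y p true y - pCond Y p false y) 0 with h | h
      · rw [abs_of_nonpos h, max_eq_right h]; ring
      · rw [abs_of_nonneg h, max_eq_left h]; ring
    rw [Finset.sum_congr rfl habs, Finset.sum_sub_distrib, Finset.sum_sub_distrib,
      ← Finset.mul_sum, hsuma, hsumb]
    ring
  have hMp : ∑ y ∈ Y.filter (fun y => 0 < y),
      max (pCond Y p true y - pCond Y p false y) 0
      ≤ ∑ y ∈ Y, max (pCond Y p true y - pCond Y p false y) 0 :=
    Finset.sum_le_sum_of_subset_of_nonneg (Finset.filter_subset _ _)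
      (fun y _ _ => le_max_right _ _)
  have hL1 : ∑ y ∈ Y.filter (fun y => 0 < y),
      |pCond Y p true y * π true y - pCond Y p false y * π false y|
      ≤ (∑ y ∈ Y.filter (fun y => 0 < y), pCond Y p false y)
        - (∑ y ∈ Y.filter (fun y => 0 < y), pCond Y p true y * π true y)
        + 2 * ∑ y ∈ Y.filter (fun y => 0 < y),
            max (pCond Y p true y - pCond Y p false y) 0 := by
    have hpt : ∀ y ∈ Y.filter (fun y => 0 < y),
        |pCond Y p true y * π true y - pCond Y p false y * π false y|
        ≤ (pCond Y p false y - pCond Y p true y * π true y)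
          + 2 * max (pCond Y p true y - pCond Y p false y) 0 := by
      intro y hy
      have hm := Finset.mem_filter.mp hy
      have hb := FactB y hm.1 hm.2
      have hbb : pCond Y p false y * π false y = pCond Y p false y := by
        linear_combination -hb
      rw [hbb]
      have haπ : pCond Y p true y * π true y ≤ pCond Y p true y :=
        mul_le_of_le_one_right (hcnn true y hm.1) (hπ1 true y hm.1)
      have hmax1 : pCond Y p true y - pCond Y p false y
          ≤ max (pCond Y p true y - pCond Y p false y) 0 := le_max_left _ _
      have hmax0 : (0:ℝ) ≤ max (pCond Y p true y - pCond Y p false y) 0 := le_max_right _ _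
      apply abs_le.mpr
      constructor <;> linarith
    calc ∑ y ∈ Y.filter (fun y => 0 < y),
        |pCond Y p true y * π true y - pCond Y p false y * π false y|
        ≤ ∑ y ∈ Y.filter (fun y => 0 < y),
            ((pCond Y p false y - pCond Y p true y * π true y)
              + 2 * max (pCond Y p true y - pCond Y p false y) 0) :=
          Finset.sum_le_sum hpt
      _ = _ := by
          rw [Finset.sum_add_distrib, Finset.sum_sub_distrib, ← Finset.mul_sum]
  have hL2 : ∑ y ∈ Y.filter (fun y => y < 0),
      |pCond Y p true y * π true y - pCond Y p false y * π false y|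
      = ∑ y ∈ Y.filter (fun y => y < 0), pCond Y p false y * π false y := by
    apply Finset.sum_congr rfl
    intro y hy
    have hm := Finset.mem_filter.mp hy
    rw [FactA y hm.1 hm.2, zero_sub, abs_neg,
      abs_of_nonneg (mul_nonneg (hcnn false y hm.1) (hπ0 false y hm.1))]
  have f1 : selRate Y p π true
      = (∑ y ∈ Y.filter (fun y => 0 < y), pCond Y p true y * π true y)
        + ∑ y ∈ Y.filter (fun y => y < 0), pCond Y p true y * π true y :=
    hsplit (fun y => pCond Y p true y * π true y)
  have f2 : selRate Y p π false
      = (∑ y ∈ Y.filter (fun y => 0 < y), pCond Y p false y * π false y)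
        + ∑ y ∈ Y.filter (fun y => y < 0), pCond Y p false y * π false y :=
    hsplit (fun y => pCond Y p false y * π false y)
  have f3 : ∑ y ∈ Y.filter (fun y => y < 0), pCond Y p true y * π true y = 0 :=
    Finset.sum_eq_zero fun y hy =>
      FactA y (Finset.mem_filter.mp hy).1 (Finset.mem_filter.mp hy).2
  have f4 : ∑ y ∈ Y.filter (fun y => 0 < y), pCond Y p false y * π false y
      = ∑ y ∈ Y.filter (fun y => 0 < y), pCond Y p false y := by
    apply Finset.sum_congr rfl
    intro y hy
    have hm := Finset.mem_filter.mp hy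
    linear_combination -(FactB y hm.1 hm.2)
  rw [hsplit (fun y => |pCond Y p true y * π true y - pCond Y p false y * π false y|)]
  linarith
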